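/- arXiv:1808.00804 — 2 statements merged into one kernel-verified Lean document; each statement's English description precedes it below -/
import Mathlib

section
/- Let X, Y be separable Banach spaces and G ∈ W^{1,∞}(I; L(X;Y*)). For any u ∈ H¹(I;X) and v ∈ H¹(I;Y), the map t ↦ ⟨G(t)u(t), v(t)⟩_{Y*×Y} belongs to W^{1,1}(I) and for almost all t ∈ I its derivative satisfies (d/dt)⟨G(t)u(t),v(t)⟩ = ⟨G'(t)u(t),v(t)⟩ + ⟨G(t)u'(t),v(t)⟩ + ⟨G(t)u(t),v'(t)⟩. -/
open MeasureTheory Filter Topology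
open scoped RealInnerProductSpace ENNReal

noncomputable section

/-- Lebesgue measure on the time interval `I = (0,T)`. -/
def μI (T : ℝ) : Measure ℝ := volume.restrict (Set.Ioo 0 T)

variable {X : Type*} [NormedAddCommGroup X] [NormedSpace ℝ X]

/-- `u'` is the weak derivative of `u` on `(0,T)`: the (absolutely continuous
representative of the) function `u` is the integral of `u'`. -/
def IsWeakDeriv (T : ℝ) (u u' : ℝ → X) : Prop :=
  IntervalIntegrable u' volume 0 T ∧
  ∀ t ∈ Set.Icc (0:ℝ) T, u t = u 0 + ∫ s in (0:ℝ)..t, u' s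

/-- Membership in `L¹((0,T); X)`. -/
def MemL1 (T : ℝ) (u : ℝ → X) : Prop := MemLp u 1 (μI T)

/-- Membership in `L²((0,T); X)`. -/
def MemL2 (T : ℝ) (u : ℝ → X) : Prop := MemLp u 2 (μI T)

/-- Membership in `L^∞((0,T); X)`. -/
def MemLinf (T : ℝ) (u : ℝ → X) : Prop := MemLp u ⊤ (μI T)

/-- `u ∈ H¹((0,T); X)` with weak derivative `u'`. -/
def MemH1 (T : ℝ) (u u' : ℝ → X) : Prop := MemL2 T u ∧ MemL2 T u' ∧ IsWeakDeriv T u u'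

/-- `u ∈ W^{1,∞}((0,T); X)` with weak derivative `u'`. -/
def MemW1inf (T : ℝ) (u u' : ℝ → X) : Prop := MemLinf T u ∧ MemLinf T u' ∧ IsWeakDeriv T u u'

/-- `D 0 ∈ H^k((0,T); X)`, the family `D` listing its weak derivatives `D j = (D 0)⁽ʲ⁾`. -/
def MemHk (T : ℝ) (k : ℕ) (D : ℕ → ℝ → X) : Prop :=
  (∀ j ≤ k, MemL2 T (D j)) ∧ ∀ j < k, IsWeakDeriv T (D j) (D (j+1))

/-- `D 0 ∈ W^{k,∞}((0,T); X)`, the family `D` listing its weak derivatives. -/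
def MemWkinf (T : ℝ) (k : ℕ) (D : ℕ → ℝ → X) : Prop :=
  (∀ j ≤ k, MemLinf T (D j)) ∧ ∀ j < k, IsWeakDeriv T (D j) (D (j+1))

section AuxBilin

open Set

variable {E F Z : Type*} [NormedAddCommGroup E] [NormedSpace ℝ E] [CompleteSpace E]
  [NormedAddCommGroup F] [NormedSpace ℝ F] [CompleteSpace F]
  [NormedAddCommGroup Z] [NormedSpace ℝ Z] [CompleteSpace Z]

/-- Applying a continuous bilinear map to a.e. strongly measurable functions is
a.e. strongly measurable. -/
lemma aesm_bilin (B : E →L[ℝ] F →L[ℝ] Z) {α : Type*} {m : MeasurableSpace α} {μ : Measure α}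
    {f : α → E} {g : α → F} (hf : AEStronglyMeasurable f μ) (hg : AEStronglyMeasurable g μ) :
    AEStronglyMeasurable (fun t => B (f t) (g t)) μ :=
  isBoundedBilinearMap_apply.continuous.comp_aestronglyMeasurable
    ((B.continuous.comp_aestronglyMeasurable hf).prodMk hg)

/-- Applying an operator-valued function to vector-valued functions, all a.e. strongly
measurable, yields an a.e. strongly measurable function. -/
lemma aesm_apply₂ {X Y : Type*} [NormedAddCommGroup X] [NormedSpace ℝ X]
    [NormedAddCommGroup Y] [NormedSpace ℝ Y]
    {α : Type*} {m : MeasurableSpace α} {μ : Measure α}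
    {a : α → X →L[ℝ] Y →L[ℝ] ℝ} {b : α → X} {c : α → Y}
    (ha : AEStronglyMeasurable a μ) (hb : AEStronglyMeasurable b μ)
    (hc : AEStronglyMeasurable c μ) :
    AEStronglyMeasurable (fun t => a t (b t) (c t)) μ :=
  isBoundedBilinearMap_apply.continuous.comp_aestronglyMeasurable
    ((isBoundedBilinearMap_apply.continuous.comp_aestronglyMeasurable
      (ha.prodMk hb)).prodMk hc)

/-- Product integrability of a bilinear pairing of integrable functions. -/
lemma integrable_prod_bilin (B : E →L[ℝ] F →L[ℝ] Z) {α β : Type*} {mα : MeasurableSpace α}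
    {mβ : MeasurableSpace β} {μ : Measure α} {ν : Measure β} [SFinite ν]
    {f : α → E} {g : β → F} (hf : Integrable f μ) (hg : Integrable g ν) :
    Integrable (fun z : α × β => B (f z.1) (g z.2)) (μ.prod ν) := by
  have hm : AEStronglyMeasurable (fun z : α × β => B (f z.1) (g z.2)) (μ.prod ν) :=
    isBoundedBilinearMap_apply.continuous.comp_aestronglyMeasurable
      ((B.continuous.comp_aestronglyMeasurable hf.1.comp_fst).prodMk hg.1.comp_snd)
  refine ((hf.norm.mul_prod hg.norm).const_mul ‖B‖).mono' hm ?_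
  refine Eventually.of_forall fun z => ?_
  calc ‖B (f z.1) (g z.2)‖ ≤ ‖B‖ * ‖f z.1‖ * ‖g z.2‖ := B.le_opNorm₂ _ _
    _ = ‖B‖ * (‖f z.1‖ * ‖g z.2‖) := by ring

/-- Fubini for the triangle: the two iterated triangle integrals sum to the
product integral. -/
lemma triangle_sum (B : E →L[ℝ] F →L[ℝ] Z) {t : ℝ} {f : ℝ → E} {g : ℝ → F}
    (hf : IntegrableOn f (Ioc (0:ℝ) t)) (hg : IntegrableOn g (Ioc (0:ℝ) t)) :
    (∫ s in Ioc (0:ℝ) t, ∫ r in Ioc (0:ℝ) s, B (f r) (g s)) +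
      (∫ s in Ioc (0:ℝ) t, ∫ r in Ioc (0:ℝ) s, B (f s) (g r)) =
      B (∫ r in Ioc (0:ℝ) t, f r) (∫ s in Ioc (0:ℝ) t, g s) := by
  have hF : Integrable (fun z : ℝ × ℝ => B (f z.1) (g z.2))
      ((volume.restrict (Ioc (0:ℝ) t)).prod (volume.restrict (Ioc (0:ℝ) t))) :=
    integrable_prod_bilin B hf hg
  have hsl : MeasurableSet {z : ℝ × ℝ | z.1 < z.2} :=
    measurableSet_lt measurable_fst measurable_snd
  have hFl : Integrable ({z : ℝ × ℝ | z.1 < z.2}.indicator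
      (fun z : ℝ × ℝ => B (f z.1) (g z.2)))
      ((volume.restrict (Ioc (0:ℝ) t)).prod (volume.restrict (Ioc (0:ℝ) t))) :=
    hF.indicator hsl
  have hFu : Integrable ({z : ℝ × ℝ | z.1 < z.2}ᶜ.indicator
      (fun z : ℝ × ℝ => B (f z.1) (g z.2)))
      ((volume.restrict (Ioc (0:ℝ) t)).prod (volume.restrict (Ioc (0:ℝ) t))) :=
    hF.indicator hsl.compl
  -- lower-triangle term
  have h1 : (∫ s in Ioc (0:ℝ) t, ∫ r in Ioc (0:ℝ) s, B (f r) (g s)) =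
      ∫ z, {z : ℝ × ℝ | z.1 < z.2}.indicator (fun z : ℝ × ℝ => B (f z.1) (g z.2)) z
        ∂((volume.restrict (Ioc (0:ℝ) t)).prod (volume.restrict (Ioc (0:ℝ) t))) := by
    rw [integral_prod_symm _ hFl]
    refine (setIntegral_congr_fun measurableSet_Ioc fun s hs => ?_).symm
    have hfun : (fun r => {z : ℝ × ℝ | z.1 < z.2}.indicator
        (fun z : ℝ × ℝ => B (f z.1) (g z.2)) (r, s)) =
        (Iio s).indicator (fun r => B (f r) (g s)) := by
      funext r
      by_cases h : r < s <;> simp [Set.indicator_apply, h]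
    rw [hfun, integral_indicator measurableSet_Iio,
        Measure.restrict_restrict measurableSet_Iio]
    have hset : Iio s ∩ Ioc (0:ℝ) t = Ioo 0 s := by
      ext r
      simp only [mem_inter_iff, mem_Iio, mem_Ioc, mem_Ioo]
      constructor
      · rintro ⟨h1, h2, h3⟩; exact ⟨h2, h1⟩
      · rintro ⟨h1, h2⟩; exact ⟨h2, h1, h2.le.trans hs.2⟩
    rw [hset, ← integral_Ioc_eq_integral_Ioo]
  -- upper-triangle term
  have h2 : (∫ s in Ioc (0:ℝ) t, ∫ r in Ioc (0:ℝ) s, B (f s) (g r)) =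
      ∫ z, {z : ℝ × ℝ | z.1 < z.2}ᶜ.indicator (fun z : ℝ × ℝ => B (f z.1) (g z.2)) z
        ∂((volume.restrict (Ioc (0:ℝ) t)).prod (volume.restrict (Ioc (0:ℝ) t))) := by
    rw [integral_prod _ hFu]
    refine (setIntegral_congr_fun measurableSet_Ioc fun s hs => ?_).symm
    have hfun : (fun r => {z : ℝ × ℝ | z.1 < z.2}ᶜ.indicator
        (fun z : ℝ × ℝ => B (f z.1) (g z.2)) (s, r)) =
        (Iic s).indicator (fun r => B (f s) (g r)) := by
      funext r
      by_cases h : r ≤ s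
      · have : ¬ (s < r) := not_lt.2 h
        simp [Set.indicator_apply, h, this]
      · have : s < r := not_le.1 h
        simp [Set.indicator_apply, h, this]
    rw [hfun, integral_indicator measurableSet_Iic,
        Measure.restrict_restrict measurableSet_Iic]
    have hset : Iic s ∩ Ioc (0:ℝ) t = Ioc 0 s := by
      ext r
      simp only [mem_inter_iff, mem_Iic, mem_Ioc]
      constructor
      · rintro ⟨h1, h2, h3⟩; exact ⟨h2, h1⟩
      · rintro ⟨h1, h2⟩; exact ⟨h2, h1, h2.trans hs.2⟩
    rw [hset]
  -- total
  have h3 : (∫ z, (fun z : ℝ × ℝ => B (f z.1) (g z.2)) z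
      ∂((volume.restrict (Ioc (0:ℝ) t)).prod (volume.restrict (Ioc (0:ℝ) t)))) =
      B (∫ r in Ioc (0:ℝ) t, f r) (∫ s in Ioc (0:ℝ) t, g s) := by
    rw [integral_prod _ hF]
    have step : ∀ r : ℝ, (∫ s in Ioc (0:ℝ) t, B (f r) (g s)) = B (f r) (∫ s in Ioc (0:ℝ) t, g s) :=
      fun r => ContinuousLinearMap.integral_comp_comm (B (f r)) hg
    calc (∫ r in Ioc (0:ℝ) t, ∫ s in Ioc (0:ℝ) t, B (f r) (g s))
        = ∫ r in Ioc (0:ℝ) t, B.flip (∫ s in Ioc (0:ℝ) t, g s) (f r) := by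
          refine integral_congr_ae (Eventually.of_forall fun r => ?_)
          show (∫ s in Ioc (0:ℝ) t, B (f r) (g s)) = B.flip (∫ s in Ioc (0:ℝ) t, g s) (f r)
          rw [step r, ContinuousLinearMap.flip_apply]
      _ = B.flip (∫ s in Ioc (0:ℝ) t, g s) (∫ r in Ioc (0:ℝ) t, f r) :=
          ContinuousLinearMap.integral_comp_comm _ hf
      _ = B (∫ r in Ioc (0:ℝ) t, f r) (∫ s in Ioc (0:ℝ) t, g s) :=
          ContinuousLinearMap.flip_apply _ _ _
  rw [h1, h2, ← integral_add hFl hFu, ← h3]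
  congr 1
  funext z
  exact congrFun (Set.indicator_self_add_compl {z : ℝ × ℝ | z.1 < z.2}
    (fun z : ℝ × ℝ => B (f z.1) (g z.2))) z

/-- Product (Leibniz) rule in integral form for a continuous bilinear pairing of
two absolutely continuous functions with integrable derivatives. -/
lemma bilin_ftc (B : E →L[ℝ] F →L[ℝ] Z) {T : ℝ} (hT : 0 ≤ T)
    (p0 : E) (q0 : F) (f : ℝ → E) (g : ℝ → F)
    (hf : IntervalIntegrable f volume 0 T) (hg : IntervalIntegrable g volume 0 T) :
    IntervalIntegrable (fun s => B (p0 + ∫ r in (0:ℝ)..s, f r) (g s)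
        + B (f s) (q0 + ∫ r in (0:ℝ)..s, g r)) volume 0 T ∧
    ∀ t ∈ Set.Icc (0:ℝ) T,
      B (p0 + ∫ r in (0:ℝ)..t, f r) (q0 + ∫ r in (0:ℝ)..t, g r)
        = B p0 q0 + ∫ s in (0:ℝ)..t, (B (p0 + ∫ r in (0:ℝ)..s, f r) (g s)
            + B (f s) (q0 + ∫ r in (0:ℝ)..s, g r)) := by
  set P : ℝ → E := fun s => p0 + ∫ r in (0:ℝ)..s, f r with hP
  set Q : ℝ → F := fun s => q0 + ∫ r in (0:ℝ)..s, g r with hQ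
  have huIcc : Set.uIcc (0:ℝ) T = Set.Icc 0 T := Set.uIcc_of_le hT
  have hPc : ContinuousOn P (Set.Icc 0 T) := by
    rw [← huIcc]
    exact continuousOn_const.add
      (intervalIntegral.continuousOn_primitive_interval' hf Set.left_mem_uIcc)
  have hQc : ContinuousOn Q (Set.Icc 0 T) := by
    rw [← huIcc]
    exact continuousOn_const.add
      (intervalIntegral.continuousOn_primitive_interval' hg Set.left_mem_uIcc)
  obtain ⟨CP, hCP⟩ := isCompact_Icc.exists_bound_of_continuousOn hPc
  obtain ⟨CQ, hCQ⟩ := isCompact_Icc.exists_bound_of_continuousOn hQc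
  have hfT : IntegrableOn f (Ioc 0 T) volume :=
    (intervalIntegrable_iff_integrableOn_Ioc_of_le hT).1 hf
  have hgT : IntegrableOn g (Ioc 0 T) volume :=
    (intervalIntegrable_iff_integrableOn_Ioc_of_le hT).1 hg
  have hPm : AEStronglyMeasurable P (volume.restrict (Ioc 0 T)) :=
    (hPc.aestronglyMeasurable measurableSet_Icc).mono_measure
      (Measure.restrict_mono Ioc_subset_Icc_self le_rfl)
  have hQm : AEStronglyMeasurable Q (volume.restrict (Ioc 0 T)) :=
    (hQc.aestronglyMeasurable measurableSet_Icc).mono_measure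
      (Measure.restrict_mono Ioc_subset_Icc_self le_rfl)
  have int1 : IntegrableOn (fun s => B (P s) (g s)) (Ioc 0 T) volume := by
    refine (hgT.norm.const_mul (‖B‖ * CP)).mono' (aesm_bilin B hPm hgT.1) ?_
    filter_upwards [ae_restrict_mem measurableSet_Ioc] with s hs
    calc ‖B (P s) (g s)‖ ≤ ‖B‖ * ‖P s‖ * ‖g s‖ := B.le_opNorm₂ _ _
      _ ≤ ‖B‖ * CP * ‖g s‖ := by
          have h1 : ‖P s‖ ≤ CP := hCP s (Ioc_subset_Icc_self hs)
          have := mul_le_mul_of_nonneg_left h1 (norm_nonneg B)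
          exact mul_le_mul_of_nonneg_right this (norm_nonneg _)
  have int2 : IntegrableOn (fun s => B (f s) (Q s)) (Ioc 0 T) volume := by
    refine (hfT.norm.const_mul (‖B‖ * CQ)).mono' (aesm_bilin B hfT.1 hQm) ?_
    filter_upwards [ae_restrict_mem measurableSet_Ioc] with s hs
    calc ‖B (f s) (Q s)‖ ≤ ‖B‖ * ‖f s‖ * ‖Q s‖ := B.le_opNorm₂ _ _
      _ ≤ ‖B‖ * ‖f s‖ * CQ := by
          have h1 : ‖Q s‖ ≤ CQ := hCQ s (Ioc_subset_Icc_self hs)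
          exact mul_le_mul_of_nonneg_left h1 (mul_nonneg (norm_nonneg B) (norm_nonneg _))
      _ = ‖B‖ * CQ * ‖f s‖ := by ring
  have intSum : IntervalIntegrable (fun s => B (P s) (g s) + B (f s) (Q s)) volume 0 T :=
    (intervalIntegrable_iff_integrableOn_Ioc_of_le hT).2 (int1.add int2)
  refine ⟨intSum, ?_⟩
  intro t ht
  obtain ⟨ht0, htT⟩ := ht
  have hsub : Set.uIcc (0:ℝ) t ⊆ Set.uIcc (0:ℝ) T := by
    rw [Set.uIcc_of_le ht0, huIcc]
    exact Set.Icc_subset_Icc le_rfl htT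
  have hft : IntervalIntegrable f volume 0 t := hf.mono_set hsub
  have hgt : IntervalIntegrable g volume 0 t := hg.mono_set hsub
  have hfIoc : IntegrableOn f (Ioc 0 t) volume :=
    (intervalIntegrable_iff_integrableOn_Ioc_of_le ht0).1 hft
  have hgIoc : IntegrableOn g (Ioc 0 t) volume :=
    (intervalIntegrable_iff_integrableOn_Ioc_of_le ht0).1 hgt
  have int1t : IntervalIntegrable (fun s => B (P s) (g s)) volume 0 t :=
    ((intervalIntegrable_iff_integrableOn_Ioc_of_le hT).2 int1).mono_set hsub
  have int2t : IntervalIntegrable (fun s => B (f s) (Q s)) volume 0 t :=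
    ((intervalIntegrable_iff_integrableOn_Ioc_of_le hT).2 int2).mono_set hsub
  have hBp0g : IntervalIntegrable (fun s => B p0 (g s)) volume 0 t :=
    (intervalIntegrable_iff_integrableOn_Ioc_of_le ht0).2 ((B p0).integrable_comp hgIoc)
  have hfq0 : IntervalIntegrable (fun s => B (f s) q0) volume 0 t :=
    (intervalIntegrable_iff_integrableOn_Ioc_of_le ht0).2 ((B.flip q0).integrable_comp hfIoc)
  have hBIg : IntervalIntegrable (fun s => B (∫ r in (0:ℝ)..s, f r) (g s)) volume 0 t := by
    have heq : (fun s => B (∫ r in (0:ℝ)..s, f r) (g s)) =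
        fun s => B (P s) (g s) - B p0 (g s) := by
      funext s
      simp only [hP, map_add, ContinuousLinearMap.add_apply]
      abel
    rw [heq]
    exact int1t.sub hBp0g
  have hfJ : IntervalIntegrable (fun s => B (f s) (∫ r in (0:ℝ)..s, g r)) volume 0 t := by
    have heq : (fun s => B (f s) (∫ r in (0:ℝ)..s, g r)) =
        fun s => B (f s) (Q s) - B (f s) q0 := by
      funext s
      simp only [hQ, map_add]
      abel
    rw [heq]
    exact int2t.sub hfq0
  -- first summand of the RHS integral
  have e1 : (∫ s in (0:ℝ)..t, B (P s) (g s)) =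
      B p0 (∫ r in (0:ℝ)..t, g r) +
        ∫ s in Set.Ioc (0:ℝ) t, ∫ r in Set.Ioc (0:ℝ) s, B (f r) (g s) := by
    have hsplit : Set.EqOn (fun s => B (P s) (g s))
        (fun s => B p0 (g s) + B (∫ r in (0:ℝ)..s, f r) (g s)) (Set.uIcc 0 t) := by
      intro s _
      simp only [hP, map_add, ContinuousLinearMap.add_apply]
    rw [intervalIntegral.integral_congr hsplit, intervalIntegral.integral_add hBp0g hBIg]
    congr 1
    · exact ContinuousLinearMap.intervalIntegral_comp_comm (B p0) hgt
    · rw [intervalIntegral.integral_of_le ht0]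
      refine setIntegral_congr_fun measurableSet_Ioc fun s hs => ?_
      rw [intervalIntegral.integral_of_le hs.1.le]
      have := ContinuousLinearMap.integral_comp_comm (B.flip (g s))
        (hfIoc.mono_set (Ioc_subset_Ioc_right hs.2))
      simp only [ContinuousLinearMap.flip_apply] at this
      exact this.symm
  -- second summand of the RHS integral
  have e2 : (∫ s in (0:ℝ)..t, B (f s) (Q s)) =
      B (∫ r in (0:ℝ)..t, f r) q0 +
        ∫ s in Set.Ioc (0:ℝ) t, ∫ r in Set.Ioc (0:ℝ) s, B (f s) (g r) := by
    have hsplit : Set.EqOn (fun s => B (f s) (Q s))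
        (fun s => B (f s) q0 + B (f s) (∫ r in (0:ℝ)..s, g r)) (Set.uIcc 0 t) := by
      intro s _
      simp only [hQ, map_add]
    rw [intervalIntegral.integral_congr hsplit, intervalIntegral.integral_add hfq0 hfJ]
    congr 1
    · have := ContinuousLinearMap.intervalIntegral_comp_comm (B.flip q0) hft
      simp only [ContinuousLinearMap.flip_apply] at this
      exact this
    · rw [intervalIntegral.integral_of_le ht0]
      refine setIntegral_congr_fun measurableSet_Ioc fun s hs => ?_
      rw [intervalIntegral.integral_of_le hs.1.le]
      exact (ContinuousLinearMap.integral_comp_comm (B (f s))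
        (hgIoc.mono_set (Ioc_subset_Ioc_right hs.2))).symm
  have key := triangle_sum B hfIoc hgIoc
  rw [intervalIntegral.integral_add int1t int2t, e1, e2]
  simp only [hP, hQ, map_add, ContinuousLinearMap.add_apply,
    intervalIntegral.integral_of_le ht0]
  rw [← key]
  abel

/-- A.e. norm bound for `L^∞` functions. -/
lemma memtop_ae_bound {α : Type*} {m : MeasurableSpace α} {μ : Measure α}
    {f : α → E} (hf : MemLp f ⊤ μ) :
    ∀ᵐ t ∂μ, ‖f t‖ ≤ (eLpNorm f ⊤ μ).toReal := by
  have h := ae_le_eLpNormEssSup (f := f) (μ := μ)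
  have hlt : eLpNormEssSup f μ < ⊤ := by
    rw [← eLpNorm_exponent_top]
    exact hf.2
  filter_upwards [h] with t ht
  rw [eLpNorm_exponent_top]
  calc ‖f t‖ = ((‖f t‖₊ : ℝ≥0∞)).toReal := by simp
    _ ≤ (eLpNormEssSup f μ).toReal := ENNReal.toReal_mono hlt.ne ht

end AuxBilin

set_option maxHeartbeats 1600000 in
/-- generalized product rule, Lemma 2.2.
If `G ∈ W^{1,∞}(I; L(X;Y*))` and `u ∈ H¹(I;X)`, `v ∈ H¹(I;Y)`, then
`t ↦ ⟨G(t)u(t), v(t)⟩` belongs to `W^{1,1}(I)` and its weak derivative is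
`⟨G'u,v⟩ + ⟨Gu',v⟩ + ⟨Gu,v'⟩`. -/
theorem statement1
    {X Y : Type*} [NormedAddCommGroup X] [NormedSpace ℝ X] [CompleteSpace X]
    [TopologicalSpace.SeparableSpace X]
    [NormedAddCommGroup Y] [NormedSpace ℝ Y] [CompleteSpace Y]
    [TopologicalSpace.SeparableSpace Y]
    (T : ℝ) (hT : 0 < T)
    (G G' : ℝ → X →L[ℝ] Y →L[ℝ] ℝ) (hG : MemW1inf T G G')
    (u u' : ℝ → X) (hu : MemH1 T u u')
    (v v' : ℝ → Y) (hv : MemH1 T v v') :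
    MemL1 T (fun t => G t (u t) (v t)) ∧
    MemL1 T (fun t => G' t (u t) (v t) + G t (u' t) (v t) + G t (u t) (v' t)) ∧
    IsWeakDeriv T (fun t => G t (u t) (v t))
      (fun t => G' t (u t) (v t) + G t (u' t) (v t) + G t (u t) (v' t)) := by
  obtain ⟨hGinf, hG'inf, hGd⟩ := hG
  obtain ⟨hu2, hu'2, hud⟩ := hu
  obtain ⟨hv2, hv'2, hvd⟩ := hv
  have hT0 : (0:ℝ) ≤ T := hT.le
  -- clean weak-derivative identities
  have hw : ∀ s ∈ Set.Icc (0:ℝ) T, (G 0 + ∫ r in (0:ℝ)..s, G' r) = G s :=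
    fun s hs => (hGd.2 s hs).symm
  have hqu : ∀ s ∈ Set.Icc (0:ℝ) T, (u 0 + ∫ r in (0:ℝ)..s, u' r) = u s :=
    fun s hs => (hud.2 s hs).symm
  have hqv : ∀ s ∈ Set.Icc (0:ℝ) T, (v 0 + ∫ r in (0:ℝ)..s, v' r) = v s :=
    fun s hs => (hvd.2 s hs).symm
  -- first application: G · u
  obtain ⟨iiA, idA⟩ := bilin_ftc (ContinuousLinearMap.id ℝ (X →L[ℝ] Y →L[ℝ] ℝ)) hT0
    (G 0) (u 0) G' u' hGd.1 hud.1
  simp only [ContinuousLinearMap.id_apply] at iiA idA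
  set w₁ : ℝ → Y →L[ℝ] ℝ := fun s => G s (u' s) + G' s (u s) with hw₁
  have hAeq : ∀ s ∈ Set.Icc (0:ℝ) T,
      (G 0 + ∫ r in (0:ℝ)..s, G' r) (u' s) + (G' s) (u 0 + ∫ r in (0:ℝ)..s, u' r) = w₁ s := by
    intro s hs
    rw [hw s hs, hqu s hs]
  have iiw₁ : IntervalIntegrable w₁ volume 0 T := by
    rw [intervalIntegrable_iff_integrableOn_Ioc_of_le hT0] at iiA ⊢
    exact iiA.congr_fun (fun s hs => hAeq s (Set.Ioc_subset_Icc_self hs)) measurableSet_Ioc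
  have idw₁ : ∀ t ∈ Set.Icc (0:ℝ) T, G t (u t) = G 0 (u 0) + ∫ s in (0:ℝ)..t, w₁ s := by
    intro t ht
    have h := idA t ht
    rw [hw t ht, hqu t ht] at h
    rw [h]
    congr 1
    refine intervalIntegral.integral_congr fun s hs => ?_
    rw [Set.uIcc_of_le ht.1] at hs
    exact hAeq s ⟨hs.1, hs.2.trans ht.2⟩
  -- second application: (G u) · v
  obtain ⟨iiB, idB⟩ := bilin_ftc (ContinuousLinearMap.id ℝ (Y →L[ℝ] ℝ)) hT0
    (G 0 (u 0)) (v 0) w₁ v' iiw₁ hvd.1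
  simp only [ContinuousLinearMap.id_apply] at iiB idB
  have hp2 : ∀ s ∈ Set.Icc (0:ℝ) T,
      (G 0 (u 0) + ∫ r in (0:ℝ)..s, w₁ r) = G s (u s) := fun s hs => (idw₁ s hs).symm
  set w₂ : ℝ → ℝ := fun t => G' t (u t) (v t) + G t (u' t) (v t) + G t (u t) (v' t) with hw₂
  have hBeq : ∀ s ∈ Set.Icc (0:ℝ) T,
      (G 0 (u 0) + ∫ r in (0:ℝ)..s, w₁ r) (v' s) + (w₁ s) (v 0 + ∫ r in (0:ℝ)..s, v' r)
        = w₂ s := by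
    intro s hs
    rw [hp2 s hs, hqv s hs]
    simp only [hw₁, hw₂, ContinuousLinearMap.add_apply]
    ring
  have iiw₂ : IntervalIntegrable w₂ volume 0 T := by
    rw [intervalIntegrable_iff_integrableOn_Ioc_of_le hT0] at iiB ⊢
    exact iiB.congr_fun (fun s hs => hBeq s (Set.Ioc_subset_Icc_self hs)) measurableSet_Ioc
  have hWD : IsWeakDeriv T (fun t => G t (u t) (v t)) w₂ := by
    refine ⟨iiw₂, fun t ht => ?_⟩
    have h := idB t ht
    rw [hp2 t ht, hqv t ht] at h
    show G t (u t) (v t) = G 0 (u 0) (v 0) + ∫ s in (0:ℝ)..t, w₂ s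
    rw [h]
    congr 1
    refine intervalIntegral.integral_congr fun s hs => ?_
    rw [Set.uIcc_of_le ht.1] at hs
    exact hBeq s ⟨hs.1, hs.2.trans ht.2⟩
  -- integrability statements
  haveI : IsFiniteMeasure (μI T) := by
    constructor
    rw [μI, Measure.restrict_apply_univ, Real.volume_Ioo]
    exact ENNReal.ofReal_lt_top
  -- bounds for G, u, v via their continuous representatives
  have huIccT : Set.uIcc (0:ℝ) T = Set.Icc 0 T := Set.uIcc_of_le hT0
  have hGc : ContinuousOn (fun s => G 0 + ∫ r in (0:ℝ)..s, G' r) (Set.Icc 0 T) := by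
    rw [← huIccT]
    haveI : ContinuousAdd (X →L[ℝ] Y →L[ℝ] ℝ) := (inferInstance : IsTopologicalAddGroup (X →L[ℝ] Y →L[ℝ] ℝ)).toContinuousAdd
    exact continuousOn_const.add
      (intervalIntegral.continuousOn_primitive_interval' hGd.1 Set.left_mem_uIcc)
  have huc : ContinuousOn (fun s => u 0 + ∫ r in (0:ℝ)..s, u' r) (Set.Icc 0 T) := by
    rw [← huIccT]
    exact continuousOn_const.add
      (intervalIntegral.continuousOn_primitive_interval' hud.1 Set.left_mem_uIcc)
  have hvc : ContinuousOn (fun s => v 0 + ∫ r in (0:ℝ)..s, v' r) (Set.Icc 0 T) := by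
    rw [← huIccT]
    exact continuousOn_const.add
      (intervalIntegral.continuousOn_primitive_interval' hvd.1 Set.left_mem_uIcc)
  have hCGex := IsCompact.exists_bound_of_continuousOn (E := X →L[ℝ] Y →L[ℝ] ℝ)
    isCompact_Icc hGc
  have hCuex := IsCompact.exists_bound_of_continuousOn (E := X) isCompact_Icc huc
  have hCvex := IsCompact.exists_bound_of_continuousOn (E := Y) isCompact_Icc hvc
  obtain ⟨CG, hCG⟩ := hCGex
  obtain ⟨Cu, hCu⟩ := hCuex
  obtain ⟨Cv, hCv⟩ := hCvex
  have hCG0 : 0 ≤ CG := le_trans (norm_nonneg _) (hCG 0 ⟨le_rfl, hT0⟩)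
  have hCu0 : 0 ≤ Cu := le_trans (norm_nonneg _) (hCu 0 ⟨le_rfl, hT0⟩)
  have hCv0 : 0 ≤ Cv := le_trans (norm_nonneg _) (hCv 0 ⟨le_rfl, hT0⟩)
  have hGbd : ∀ᵐ t ∂(μI T), ‖G t‖ ≤ CG := by
    rw [μI]
    filter_upwards [ae_restrict_mem measurableSet_Ioo] with t ht
    have ht' : t ∈ Set.Icc (0:ℝ) T := ⟨ht.1.le, ht.2.le⟩
    rw [hGd.2 t ht']
    exact hCG t ht'
  have hubd : ∀ᵐ t ∂(μI T), ‖u t‖ ≤ Cu := by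
    rw [μI]
    filter_upwards [ae_restrict_mem measurableSet_Ioo] with t ht
    have ht' : t ∈ Set.Icc (0:ℝ) T := ⟨ht.1.le, ht.2.le⟩
    rw [hud.2 t ht']
    exact hCu t ht'
  have hvbd : ∀ᵐ t ∂(μI T), ‖v t‖ ≤ Cv := by
    rw [μI]
    filter_upwards [ae_restrict_mem measurableSet_Ioo] with t ht
    have ht' : t ∈ Set.Icc (0:ℝ) T := ⟨ht.1.le, ht.2.le⟩
    rw [hvd.2 t ht']
    exact hCv t ht'
  set CG' : ℝ := (eLpNorm G' ⊤ (μI T)).toReal with hCG'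
  have hG'bd : ∀ᵐ t ∂(μI T), ‖G' t‖ ≤ CG' := memtop_ae_bound hG'inf
  have hCG'0 : 0 ≤ CG' := ENNReal.toReal_nonneg
  -- measurability
  have hmG : AEStronglyMeasurable G (μI T) := hGinf.aestronglyMeasurable
  have hmG' : AEStronglyMeasurable G' (μI T) := hG'inf.aestronglyMeasurable
  have hmu : AEStronglyMeasurable u (μI T) := hu2.aestronglyMeasurable
  have hmu' : AEStronglyMeasurable u' (μI T) := hu'2.aestronglyMeasurable
  have hmv : AEStronglyMeasurable v (μI T) := hv2.aestronglyMeasurable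
  have hmv' : AEStronglyMeasurable v' (μI T) := hv'2.aestronglyMeasurable
  -- L¹ membership of G u v
  have hL1a : MemL1 T (fun t => G t (u t) (v t)) := by
    rw [MemL1, memLp_one_iff_integrable]
    refine (integrable_const (CG * Cu * Cv)).mono' (aesm_apply₂ hmG hmu hmv) ?_
    filter_upwards [hGbd, hubd, hvbd] with t h1 h2 h3
    calc ‖G t (u t) (v t)‖ ≤ ‖G t‖ * ‖u t‖ * ‖v t‖ := (G t).le_opNorm₂ _ _
      _ ≤ CG * Cu * Cv :=
          mul_le_mul (mul_le_mul h1 h2 (norm_nonneg _) hCG0) h3 (norm_nonneg _)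
            (mul_nonneg hCG0 hCu0)
  -- L¹ membership of the derivative
  have hu'1 : Integrable u' (μI T) :=
    memLp_one_iff_integrable.1 (MemLp.mono_exponent hu'2 one_le_two)
  have hv'1 : Integrable v' (μI T) :=
    memLp_one_iff_integrable.1 (MemLp.mono_exponent hv'2 one_le_two)
  have i1 : Integrable (fun t => G' t (u t) (v t)) (μI T) := by
    refine (integrable_const (CG' * Cu * Cv)).mono' (aesm_apply₂ hmG' hmu hmv) ?_
    filter_upwards [hG'bd, hubd, hvbd] with t h1 h2 h3
    calc ‖G' t (u t) (v t)‖ ≤ ‖G' t‖ * ‖u t‖ * ‖v t‖ := (G' t).le_opNorm₂ _ _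
      _ ≤ CG' * Cu * Cv :=
          mul_le_mul (mul_le_mul h1 h2 (norm_nonneg _) hCG'0) h3 (norm_nonneg _)
            (mul_nonneg hCG'0 hCu0)
  have i2 : Integrable (fun t => G t (u' t) (v t)) (μI T) := by
    refine (hu'1.norm.const_mul (CG * Cv)).mono' (aesm_apply₂ hmG hmu' hmv) ?_
    filter_upwards [hGbd, hvbd] with t h1 h3
    calc ‖G t (u' t) (v t)‖ ≤ ‖G t‖ * ‖u' t‖ * ‖v t‖ := (G t).le_opNorm₂ _ _
      _ ≤ CG * ‖u' t‖ * Cv :=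
          mul_le_mul (mul_le_mul_of_nonneg_right h1 (norm_nonneg _)) h3 (norm_nonneg _)
            (mul_nonneg hCG0 (norm_nonneg _))
      _ = CG * Cv * ‖u' t‖ := by ring
  have i3 : Integrable (fun t => G t (u t) (v' t)) (μI T) := by
    refine (hv'1.norm.const_mul (CG * Cu)).mono' (aesm_apply₂ hmG hmu hmv') ?_
    filter_upwards [hGbd, hubd] with t h1 h2
    calc ‖G t (u t) (v' t)‖ ≤ ‖G t‖ * ‖u t‖ * ‖v' t‖ := (G t).le_opNorm₂ _ _
      _ ≤ CG * Cu * ‖v' t‖ :=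
          mul_le_mul_of_nonneg_right (mul_le_mul h1 h2 (norm_nonneg _) hCG0) (norm_nonneg _)
  have hL1b : MemL1 T w₂ := by
    rw [MemL1, memLp_one_iff_integrable, hw₂]
    exact (i1.add i2).add i3
  exact ⟨hL1a, hL1b, hWD⟩
end
end

section
/- Let V be a real Hilbert space with dual V*, A ∈ W^{1,∞}(I; L(V;V*)) with A(t) self-adjoint for a.e. t ∈ I (i.e. ⟨A(t)φ,ψ⟩ = ⟨A(t)ψ,φ⟩ for all φ,ψ ∈ V), and v ∈ H¹(I;V). Then t ↦ ⟨A(t)v(t),v(t)⟩ belongs to W^{1,1}(I) and for almost all t ∈ I, 2⟨A(t)v(t), v'(t)⟩ = (d/dt)⟨A(t)v(t),v(t)⟩ − ⟨A'(t)v(t),v(t)⟩. -/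
open MeasureTheory Filter Topology
open scoped RealInnerProductSpace ENNReal

noncomputable section

variable {X : Type*} [NormedAddCommGroup X] [NormedSpace ℝ X]

set_option synthInstance.maxHeartbeats 1000000
set_option maxHeartbeats 1000000

section AuxiliaryLemmas
open Set Function
variable {F G : Type*} [NormedAddCommGroup F] [NormedSpace ℝ F]
  [NormedAddCommGroup G] [NormedSpace ℝ G] [CompleteSpace F] [CompleteSpace G]

lemma aesm_eval {α : Type*} [MeasurableSpace α] {μ : Measure α} {f : α → F →L[ℝ] G} {g : α → F}
    (hf : AEStronglyMeasurable f μ) (hg : AEStronglyMeasurable g μ) :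
    AEStronglyMeasurable (fun s => f s (g s)) μ :=
  isBoundedBilinearMap_apply.continuous.comp_aestronglyMeasurable (hf.prodMk hg)

lemma integrable_eval_left {α : Type*} [MeasurableSpace α] {μ : Measure α}
    {f : α → F →L[ℝ] G} {g : α → F} (hf : Integrable f μ) (hg : AEStronglyMeasurable g μ)
    {C : ℝ} (hC : ∀ᵐ s ∂μ, ‖g s‖ ≤ C) : Integrable (fun s => f s (g s)) μ := by
  refine (hf.norm.mul_const C).mono' (aesm_eval hf.aestronglyMeasurable hg) ?_
  filter_upwards [hC] with s hs
  calc ‖f s (g s)‖ ≤ ‖f s‖ * ‖g s‖ := (f s).le_opNorm _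
    _ ≤ ‖f s‖ * C := mul_le_mul_of_nonneg_left hs (norm_nonneg _)

lemma integrable_eval_right {α : Type*} [MeasurableSpace α] {μ : Measure α}
    {f : α → F →L[ℝ] G} {g : α → F} (hf : AEStronglyMeasurable f μ) {C : ℝ}
    (hC : ∀ᵐ s ∂μ, ‖f s‖ ≤ C) (hg : Integrable g μ) :
    Integrable (fun s => f s (g s)) μ := by
  refine (hg.norm.const_mul C).mono' (aesm_eval hf hg.aestronglyMeasurable) ?_
  filter_upwards [hC] with s hs
  calc ‖f s (g s)‖ ≤ ‖f s‖ * ‖g s‖ := (f s).le_opNorm _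
    _ ≤ C * ‖g s‖ := mul_le_mul_of_nonneg_right hs (norm_nonneg _)

/-- Primitive is continuous on `Icc 0 T`. -/
lemma primitive_continuousOn {f : ℝ → F} {T : ℝ} (hf : IntegrableOn f (Set.Ioc 0 T)) :
    ContinuousOn (fun t => ∫ s in Set.Ioc 0 t, f s) (Set.Icc 0 T) :=
  intervalIntegral.continuousOn_primitive
    ((integrableOn_Icc_iff_integrableOn_Ioc).2 hf)

/-- Key Fubini identity over the triangle. -/
lemma fubini_tri {f' : ℝ → F →L[ℝ] G} {g' : ℝ → F} {t : ℝ} (ht : 0 ≤ t)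
    (hf : IntegrableOn f' (Set.Ioc 0 t)) (hg : IntegrableOn g' (Set.Ioc 0 t)) :
    ((∫ s in Set.Ioc 0 t, f' s (∫ r in Set.Ioc 0 s, g' r)) +
      ∫ s in Set.Ioc 0 t, (∫ r in Set.Ioc 0 s, f' r) (g' s)) =
    (∫ s in Set.Ioc 0 t, f' s) (∫ s in Set.Ioc 0 t, g' s) := by
  set μ : Measure ℝ := volume.restrict (Set.Ioc 0 t) with hμ
  set H : ℝ → ℝ → G := fun s r => if r ≤ s then f' s (g' r) else 0 with hH
  set Fv : F →L[ℝ] G := ∫ s in Set.Ioc 0 t, f' s with hFv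
  -- integrability of uncurry H on the product
  have hmeas : AEStronglyMeasurable (uncurry H) (μ.prod μ) := by
    have h1 : AEStronglyMeasurable (fun p : ℝ × ℝ => f' p.1 (g' p.2)) (μ.prod μ) :=
      aesm_eval (hf.aestronglyMeasurable.comp_fst) (hg.aestronglyMeasurable.comp_snd)
    have hset : MeasurableSet {p : ℝ × ℝ | p.2 ≤ p.1} :=
      measurableSet_le measurable_snd measurable_fst
    have : uncurry H = {p : ℝ × ℝ | p.2 ≤ p.1}.indicator (fun p => f' p.1 (g' p.2)) := by
      ext p
      by_cases h : p.2 ≤ p.1 <;>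
        simp [uncurry, hH, h, Set.indicator_of_mem, Set.indicator_of_notMem, Set.mem_setOf_eq]
    rw [this]
    exact h1.indicator hset
  have hHint : Integrable (uncurry H) (μ.prod μ) := by
    refine (hf.norm.mul_prod hg.norm).mono' hmeas ?_
    refine Eventually.of_forall fun p => ?_
    by_cases h : p.2 ≤ p.1
    · simp only [uncurry, hH, if_pos h]
      calc ‖f' p.1 (g' p.2)‖ ≤ ‖f' p.1‖ * ‖g' p.2‖ := (f' p.1).le_opNorm _
        _ ≤ ‖f' p.1‖ * ‖g' p.2‖ := le_rfl
    · simp only [uncurry, hH, if_neg h, norm_zero]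
      positivity
  -- first term equals double integral of H
  have hS1 : (∫ s in Set.Ioc 0 t, f' s (∫ r in Set.Ioc 0 s, g' r)) =
      ∫ s, ∫ r, H s r ∂μ ∂μ := by
    rw [hμ]
    refine setIntegral_congr_fun measurableSet_Ioc fun s hs => ?_
    have hsub : Set.Ioc 0 s ⊆ Set.Ioc 0 t := Set.Ioc_subset_Ioc le_rfl hs.2
    have hint : IntegrableOn g' (Set.Ioc 0 s) := hg.mono_set hsub
    rw [← ContinuousLinearMap.integral_comp_comm (f' s) hint]
    have : ∀ r ∈ Set.Ioc 0 t, H s r = (Set.Iic s).indicator (fun r => f' s (g' r)) r := by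
      intro r _
      by_cases h : r ≤ s <;>
        simp [hH, h, Set.indicator_of_mem, Set.indicator_of_notMem, Set.mem_Iic]
    rw [setIntegral_congr_fun measurableSet_Ioc this, setIntegral_indicator measurableSet_Iic]
    congr 1
    rw [Set.Ioc_inter_Iic, min_eq_right hs.2]
  -- pointwise identity for the swapped inner integral
  have hS2inner : ∀ r ∈ Set.Ioc 0 t,
      (∫ s in Set.Ioc 0 r, f' s) (g' r) = Fv (g' r) - ∫ s, H s r ∂μ := by
    intro r hr
    have hsub1 : Set.Ioc 0 r ⊆ Set.Ioc 0 t := Set.Ioc_subset_Ioc le_rfl hr.2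
    have hsub2 : Set.Ioc r t ⊆ Set.Ioc 0 t := Set.Ioc_subset_Ioc hr.1.le le_rfl
    have hsplit : Fv = (∫ s in Set.Ioc 0 r, f' s) + ∫ s in Set.Ioc r t, f' s := by
      rw [hFv, ← setIntegral_union (Set.Ioc_disjoint_Ioc_of_le le_rfl) measurableSet_Ioc
        (hf.mono_set hsub1) (hf.mono_set hsub2), Set.Ioc_union_Ioc_eq_Ioc hr.1.le hr.2]
    have hinner : (∫ s, H s r ∂μ) = (∫ s in Set.Ioc r t, f' s) (g' r) := by
      rw [hμ]
      have : ∀ s ∈ Set.Ioc 0 t, H s r = (Set.Ici r).indicator (fun s => f' s (g' r)) s := by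
        intro s _
        by_cases h : r ≤ s <;>
          simp [hH, h, Set.indicator_of_mem, Set.indicator_of_notMem, Set.mem_Ici]
      rw [setIntegral_congr_fun measurableSet_Ioc this, setIntegral_indicator measurableSet_Ici]
      have : Set.Ioc 0 t ∩ Set.Ici r = Set.Icc r t := by
        ext x; simp [Set.mem_Ioc, Set.mem_Ici, Set.mem_Icc, and_comm]
        intro h1 _; exact lt_of_lt_of_le hr.1 h1
      rw [this, integral_Icc_eq_integral_Ioc,
        ← ContinuousLinearMap.integral_apply (hf.mono_set hsub2)]
    rw [hinner, hsplit]
    simp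
  -- conclude
  have hswap : (∫ s, ∫ r, H s r ∂μ ∂μ) = ∫ r, ∫ s, H s r ∂μ ∂μ :=
    integral_integral_swap hHint
  have hFg : Integrable (fun r => Fv (g' r)) μ := Fv.integrable_comp hg
  have hHr : Integrable (fun r => ∫ s, H s r ∂μ) μ := hHint.integral_prod_right
  have hS2 : (∫ r in Set.Ioc 0 t, (∫ s in Set.Ioc 0 r, f' s) (g' r)) =
      Fv (∫ s in Set.Ioc 0 t, g' s) - ∫ r, ∫ s, H s r ∂μ ∂μ := by
    have : (∫ r in Set.Ioc 0 t, (∫ s in Set.Ioc 0 r, f' s) (g' r)) =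
        ∫ r in Set.Ioc 0 t, (Fv (g' r) - ∫ s, H s r ∂μ) :=
      setIntegral_congr_fun measurableSet_Ioc fun r hr => hS2inner r hr
    rw [this]
    rw [integral_sub hFg hHr, ContinuousLinearMap.integral_comp_comm Fv hg]
  rw [hS1, hS2, hswap]
  abel

/-- Product rule for primitives (integration by parts), bilinear form = CLM application. -/
lemma parts {f' : ℝ → F →L[ℝ] G} {g' : ℝ → F} (f0 : F →L[ℝ] G) (g0 : F) {t : ℝ} (ht : 0 ≤ t)
    (hf : IntegrableOn f' (Set.Ioc 0 t)) (hg : IntegrableOn g' (Set.Ioc 0 t)) :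
    (f0 + ∫ s in Set.Ioc 0 t, f' s) (g0 + ∫ s in Set.Ioc 0 t, g' s) =
      f0 g0 + ∫ s in Set.Ioc 0 t,
        (f' s (g0 + ∫ r in Set.Ioc 0 s, g' r) + (f0 + ∫ r in Set.Ioc 0 s, f' r) (g' s)) := by
  set μ : Measure ℝ := volume.restrict (Set.Ioc 0 t) with hμ
  -- bounds for the primitives
  obtain ⟨Cg, hCg⟩ : ∃ C, ∀ s ∈ Set.Icc 0 t, ‖∫ r in Set.Ioc 0 s, g' r‖ ≤ C :=
    (isCompact_Icc).exists_bound_of_continuousOn (primitive_continuousOn hg)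
  obtain ⟨Cf, hCf⟩ : ∃ C, ∀ s ∈ Set.Icc 0 t, ‖∫ r in Set.Ioc 0 s, f' r‖ ≤ C :=
    (isCompact_Icc).exists_bound_of_continuousOn (primitive_continuousOn hf)
  have haePg : ∀ᵐ s ∂μ, ‖∫ r in Set.Ioc 0 s, g' r‖ ≤ Cg := by
    filter_upwards [ae_restrict_mem measurableSet_Ioc] with s hs
    exact hCg s (Set.Ioc_subset_Icc_self hs)
  have haePf : ∀ᵐ s ∂μ, ‖∫ r in Set.Ioc 0 s, f' r‖ ≤ Cf := by
    filter_upwards [ae_restrict_mem measurableSet_Ioc] with s hs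
    exact hCf s (Set.Ioc_subset_Icc_self hs)
  have hPgm : AEStronglyMeasurable (fun s => ∫ r in Set.Ioc 0 s, g' r) μ :=
    ((primitive_continuousOn hg).mono Set.Ioc_subset_Icc_self).aestronglyMeasurable
      measurableSet_Ioc
  have hPfm : AEStronglyMeasurable (fun s => ∫ r in Set.Ioc 0 s, f' r) μ :=
    ((primitive_continuousOn hf).mono Set.Ioc_subset_Icc_self).aestronglyMeasurable
      measurableSet_Ioc
  -- integrability of the four pieces
  have h1 : Integrable (fun s => f' s g0) μ :=
    integrable_eval_left hf aestronglyMeasurable_const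
      (Eventually.of_forall fun _ => le_rfl)
  have h2 : Integrable (fun s => f' s (∫ r in Set.Ioc 0 s, g' r)) μ :=
    integrable_eval_left hf hPgm haePg
  have h3 : Integrable (fun s => f0 (g' s)) μ := f0.integrable_comp hg
  have h4 : Integrable (fun s => (∫ r in Set.Ioc 0 s, f' r) (g' s)) μ :=
    integrable_eval_right hPfm haePf hg
  have expand : ∀ s, (f' s (g0 + ∫ r in Set.Ioc 0 s, g' r) + (f0 + ∫ r in Set.Ioc 0 s, f' r) (g' s))
      = f' s g0 + f' s (∫ r in Set.Ioc 0 s, g' r) + (f0 (g' s) + (∫ r in Set.Ioc 0 s, f' r) (g' s)) := by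
    intro s
    simp only [map_add, ContinuousLinearMap.add_apply]
    try abel
  rw [show (∫ s in Set.Ioc 0 t,
        (f' s (g0 + ∫ r in Set.Ioc 0 s, g' r) + (f0 + ∫ r in Set.Ioc 0 s, f' r) (g' s))) =
      ∫ s in Set.Ioc 0 t, (f' s g0 + f' s (∫ r in Set.Ioc 0 s, g' r)
        + (f0 (g' s) + (∫ r in Set.Ioc 0 s, f' r) (g' s))) from
    integral_congr_ae (Eventually.of_forall expand)]
  have h12 : Integrable (fun s => f' s g0 + f' s (∫ r in Set.Ioc 0 s, g' r)) μ := h1.add h2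
  have h34 : Integrable (fun s => f0 (g' s) + (∫ r in Set.Ioc 0 s, f' r) (g' s)) μ := h3.add h4
  rw [integral_add h12 h34, integral_add h1 h2, integral_add h3 h4]
  have e1 : (∫ s in Set.Ioc 0 t, f' s g0) = (∫ s in Set.Ioc 0 t, f' s) g0 :=
    (ContinuousLinearMap.integral_apply hf g0).symm
  have e3 : (∫ s in Set.Ioc 0 t, f0 (g' s)) = f0 (∫ s in Set.Ioc 0 t, g' s) :=
    ContinuousLinearMap.integral_comp_comm f0 hg
  have key := fubini_tri ht hf hg
  simp only [map_add, ContinuousLinearMap.add_apply]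
  rw [e1, e3, ← key]
  abel

end AuxiliaryLemmas

/-- differentiation of the quadratic form of `A`: for
`A ∈ W^{1,∞}(I;L(V;V*))` pointwise self-adjoint and `v ∈ H¹(I;V)`, the function
`t ↦ ⟨A(t)v(t), v(t)⟩` belongs to `W^{1,1}(I)` and a.e.
`2⟨A(t)v(t), v'(t)⟩ = (d/dt)⟨A(t)v(t),v(t)⟩ − ⟨A'(t)v(t),v(t)⟩`. -/
theorem statement15
    {V : Type*} [NormedAddCommGroup V] [InnerProductSpace ℝ V] [CompleteSpace V]
    (T : ℝ) (hT : 0 < T)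
    (A A' : ℝ → V →L[ℝ] V →L[ℝ] ℝ) (hA : MemW1inf T A A')
    (hAsym : ∀ᵐ t ∂ (μI T), ∀ x y : V, A t x y = A t y x)
    (v v' : ℝ → V) (hv : MemH1 T v v') :
    ∃ g' : ℝ → ℝ,
      MemL1 T (fun t => A t (v t) (v t)) ∧ MemL1 T g' ∧
      IsWeakDeriv T (fun t => A t (v t) (v t)) g' ∧
      ∀ᵐ t ∂ (μI T), 2 * A t (v t) (v' t) = g' t - A' t (v t) (v t) := by
  obtain ⟨-, -, hA'ii, hAeqI⟩ := hA
  obtain ⟨-, -, hv'ii, hveqI⟩ := hv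
  have hTle : (0:ℝ) ≤ T := hT.le
  letI : NormedAddCommGroup (V →L[ℝ] V →L[ℝ] ℝ) := inferInstance
  have hA'T : IntegrableOn A' (Set.Ioc 0 T) := by
    rwa [intervalIntegrable_iff, Set.uIoc_of_le hTle] at hA'ii
  have hv'T : IntegrableOn v' (Set.Ioc 0 T) := by
    rwa [intervalIntegrable_iff, Set.uIoc_of_le hTle] at hv'ii
  set ν : Measure ℝ := volume.restrict (Set.Ioc 0 T) with hν
  set Vt : ℝ → V := fun t => v 0 + ∫ s in Set.Ioc 0 t, v' s with hVt
  set At : ℝ → (V →L[ℝ] V →L[ℝ] ℝ) := fun t => A 0 + ∫ s in Set.Ioc 0 t, A' s with hAt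
  have hVeq : ∀ t ∈ Set.Icc (0:ℝ) T, v t = Vt t := fun t ht => by
    rw [hveqI t ht, intervalIntegral.integral_of_le ht.1]
  have hAeq : ∀ t ∈ Set.Icc (0:ℝ) T, A t = At t := fun t ht => by
    rw [hAeqI t ht, intervalIntegral.integral_of_le ht.1]
  have hVc : ContinuousOn Vt (Set.Icc 0 T) :=
    continuousOn_const.add (primitive_continuousOn hv'T)
  have hAc : ContinuousOn At (Set.Icc 0 T) :=
    continuousOn_const.add (primitive_continuousOn hA'T)
  obtain ⟨Cv, hCv⟩ := (isCompact_Icc (a := (0:ℝ)) (b := T)).exists_bound_of_continuousOn hVc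
  obtain ⟨Ca, hCa⟩ := IsCompact.exists_bound_of_continuousOn (f := At) isCompact_Icc hAc
  have hCv0 : 0 ≤ Cv := le_trans (norm_nonneg _) (hCv 0 ⟨le_rfl, hTle⟩)
  have hCa0 : 0 ≤ Ca := le_trans (norm_nonneg _) (hCa 0 ⟨le_rfl, hTle⟩)
  haveI : TopologicalSpace.PseudoMetrizableSpace (V →L[ℝ] V →L[ℝ] ℝ) :=
    letI : PseudoMetricSpace (V →L[ℝ] V →L[ℝ] ℝ) := SeminormedAddCommGroup.toPseudoMetricSpace
    inferInstance
  have hVm : AEStronglyMeasurable Vt ν :=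
    (hVc.mono Set.Ioc_subset_Icc_self).aestronglyMeasurable measurableSet_Ioc
  have hAm : AEStronglyMeasurable At ν :=
    (hAc.mono Set.Ioc_subset_Icc_self).aestronglyMeasurable measurableSet_Ioc
  have haeV : ∀ᵐ s ∂ν, ‖Vt s‖ ≤ Cv := by
    filter_upwards [ae_restrict_mem measurableSet_Ioc] with s hs
    exact hCv s (Set.Ioc_subset_Icc_self hs)
  have haeA : ∀ᵐ s ∂ν, ‖At s‖ ≤ Ca := by
    filter_upwards [ae_restrict_mem measurableSet_Ioc] with s hs
    exact hCa s (Set.Ioc_subset_Icc_self hs)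
  set w' : ℝ → V →L[ℝ] ℝ := fun s => A' s (Vt s) + At s (v' s) with hw'def
  have hw'1 : Integrable (fun s => A' s (Vt s)) ν := integrable_eval_left hA'T hVm haeV
  have hw'2 : Integrable (fun s => At s (v' s)) ν := integrable_eval_right hAm haeA hv'T
  have hw' : Integrable w' ν := by have := Integrable.add (ε' := V →L[ℝ] ℝ) hw'1 hw'2; exact this
  have hw'T : IntegrableOn w' (Set.Ioc 0 T) := hw'
  -- first product rule
  have hP1 : ∀ t ∈ Set.Icc (0:ℝ) T, At t (Vt t) = A 0 (v 0) + ∫ s in Set.Ioc 0 t, w' s := by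
    intro t ht
    exact parts (A 0) (v 0) ht.1 (hA'T.mono_set (Set.Ioc_subset_Ioc le_rfl ht.2))
      (hv'T.mono_set (Set.Ioc_subset_Ioc le_rfl ht.2))
  set g' : ℝ → ℝ := fun s => w' s (Vt s) + (At s (Vt s)) (v' s) with hg'def
  have hg'1 : Integrable (fun s => w' s (Vt s)) ν := integrable_eval_left hw' hVm haeV
  have haeAV : ∀ᵐ s ∂ν, ‖At s (Vt s)‖ ≤ Ca * Cv := by
    filter_upwards [haeA, haeV] with s h1 h2
    calc ‖At s (Vt s)‖ ≤ ‖At s‖ * ‖Vt s‖ := (At s).le_opNorm _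
      _ ≤ Ca * Cv := mul_le_mul h1 h2 (norm_nonneg _) hCa0
  have hg'2 : Integrable (fun s => (At s (Vt s)) (v' s)) ν :=
    integrable_eval_right (aesm_eval hAm hVm) haeAV hv'T
  have hg'int : Integrable g' ν := by have := hg'1.add hg'2; exact this
  -- second product rule
  have hP2 : ∀ t ∈ Set.Icc (0:ℝ) T,
      A t (v t) (v t) = A 0 (v 0) (v 0) + ∫ s in Set.Ioc 0 t, g' s := by
    intro t ht
    have h1 := parts (A 0 (v 0)) (v 0) ht.1
      ((hw'T.mono_set (Set.Ioc_subset_Ioc le_rfl ht.2)))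
      (hv'T.mono_set (Set.Ioc_subset_Ioc le_rfl ht.2))
    have e1 : A 0 (v 0) + (∫ s in Set.Ioc 0 t, w' s) = At t (Vt t) := (hP1 t ht).symm
    calc A t (v t) (v t)
        = (A 0 (v 0) + ∫ s in Set.Ioc 0 t, w' s) (v 0 + ∫ s in Set.Ioc 0 t, v' s) := by
          rw [hAeq t ht, hVeq t ht, e1]
      _ = A 0 (v 0) (v 0) + ∫ s in Set.Ioc 0 t,
            (w' s (v 0 + ∫ r in Set.Ioc 0 s, v' r)
              + (A 0 (v 0) + ∫ r in Set.Ioc 0 s, w' r) (v' s)) := h1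
      _ = A 0 (v 0) (v 0) + ∫ s in Set.Ioc 0 t, g' s := by
          congr 1
          refine setIntegral_congr_fun measurableSet_Ioc fun s hs => ?_
          have hsI : s ∈ Set.Icc (0:ℝ) T := ⟨hs.1.le, hs.2.trans ht.2⟩
          rw [hg'def]
          simp only [← hP1 s hsI]
          rfl
  -- transfer to μI T
  have hle : μI T ≤ ν := by
    rw [μI, hν]
    exact Measure.restrict_mono Set.Ioo_subset_Ioc_self le_rfl
  have hAtInt : Integrable At ν :=
    (integrable_const Ca).mono' hAm haeA
  have hAV : Integrable (fun s => At s (Vt s)) ν := integrable_eval_left hAtInt hVm haeV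
  have hAVV : Integrable (fun s => (At s (Vt s)) (Vt s)) ν := integrable_eval_left hAV hVm haeV
  refine ⟨g', ?_, ?_, ⟨?_, ?_⟩, ?_⟩
  · rw [MemL1, memLp_one_iff_integrable]
    refine (hAVV.mono_measure hle).congr ?_
    have : ∀ᵐ t ∂ (μI T), t ∈ Set.Ioo (0:ℝ) T := ae_restrict_mem measurableSet_Ioo
    filter_upwards [this] with t ht
    rw [hAeq t (Set.Ioo_subset_Icc_self ht), hVeq t (Set.Ioo_subset_Icc_self ht)]
  · rw [MemL1, memLp_one_iff_integrable]
    exact hg'int.mono_measure hle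
  · rw [intervalIntegrable_iff, Set.uIoc_of_le hTle]
    exact hg'int
  · intro t ht
    rw [intervalIntegral.integral_of_le ht.1]
    simpa using hP2 t ht
  · have hmem : ∀ᵐ t ∂ (μI T), t ∈ Set.Ioo (0:ℝ) T := ae_restrict_mem measurableSet_Ioo
    filter_upwards [hAsym, hmem] with t hsym ht
    have htI : t ∈ Set.Icc (0:ℝ) T := Set.Ioo_subset_Icc_self ht
    rw [hg'def, hw'def]
    simp only [ContinuousLinearMap.add_apply]
    rw [← hAeq t htI, ← hVeq t htI, hsym (v' t) (v t)]
    ring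
end
end
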